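/- Let m ≥ 3 be odd and let G be the Artin group of type I₂(m), presented as ⟨a, b | w = w'⟩ where w is the alternating word abab⋯ of length m starting with a and w' is the alternating word baba⋯ of length m starting with b. Then the abelianization of G is infinite cyclic (a and b map to the same generator), and the zeroth-order degree of G is δ₀ = dim_ℚ( G'/G'' ⊗_ℤ ℚ ) = m − 1. -/

import Mathlib

/-!
STATEMENT 16: For odd `m ≥ 3`, the Artin group `G` of type `I₂(m)`, presented as
`⟨a, b | w = w'⟩` with `w = abab⋯` and `w' = baba⋯` the two alternating words of length `m`,
has infinite cyclic abelianization (with `a`, `b` mapping to the same generator), and its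
zeroth-order degree is `δ₀ = dim_ℚ(G'/G'' ⊗_ℤ ℚ) = m - 1`.
-/

open scoped TensorProduct

/-- The alternating word `xyxy⋯` of length `m`. -/
def altWord {α : Type*} [Monoid α] (x y : α) (m : ℕ) : α :=
  ((List.range m).map (fun i => if i % 2 = 0 then x else y)).prod

/-- The single relator `w w'⁻¹` of the Artin group of type `I₂(m)`, where `a = of 0`,
`b = of 1`. -/
def dihedralArtinRels (m : ℕ) : Set (FreeGroup (Fin 2)) :=
  {altWord (FreeGroup.of 0) (FreeGroup.of 1) m *
    (altWord (FreeGroup.of 1) (FreeGroup.of 0) m)⁻¹}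

namespace DihedralAux

theorem altWord_succ {α : Type*} [Monoid α] (x y : α) (n : ℕ) :
    altWord x y (n+1) = altWord x y n * (if n % 2 = 0 then x else y) := by
  simp [altWord, List.range_succ]

theorem map_altWord {M N : Type*} [Monoid M] [Monoid N] (f : M →* N) (x y : M) (n : ℕ) :
    f (altWord x y n) = altWord (f x) (f y) n := by
  induction n with
  | zero => simp [altWord]
  | succ n ih => rw [altWord_succ, map_mul, ih, altWord_succ]; split <;> rfl

theorem altWord_same {M : Type*} [Monoid M] (x : M) (n : ℕ) : altWord x x n = x ^ n := by
  induction n with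
  | zero => simp [altWord]
  | succ n ih => rw [altWord_succ, ih]; split <;> rw [pow_succ]

theorem altWord_comm {M : Type*} [CommMonoid M] (x y : M) (n : ℕ) :
    altWord x y n = x ^ ((n+1)/2) * y ^ (n/2) := by
  induction n with
  | zero => simp [altWord]
  | succ n ih =>
    rw [altWord_succ, ih]
    rcases Nat.even_or_odd n with h | h
    · have h0 := Nat.even_iff.mp h
      rw [if_pos h0, show (n+1)/2 = n/2 from by omega, show (n+1+1)/2 = n/2 + 1 from by omega,
        pow_succ]
      exact mul_right_comm _ _ _
    · have h1 := Nat.odd_iff.mp h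
      rw [if_neg (by omega), show (n+1+1)/2 = (n+1)/2 from by omega,
        show (n+1)/2 = n/2 + 1 from by omega, pow_succ, pow_succ, mul_assoc]

theorem altWord_odd_expand {H : Type*} [Group H] (t v : H) (n : ℕ) :
    altWord t (v * t) n =
      ((List.range n).map (fun j => if j % 2 = 1 then t ^ j * v * (t ^ j)⁻¹ else 1)).prod
        * t ^ n := by
  induction n with
  | zero => simp [altWord]
  | succ n ih =>
    rw [altWord_succ, ih, List.range_succ, List.map_append, List.prod_append]
    simp only [List.map_cons, List.map_nil, List.prod_cons, List.prod_nil, mul_one]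
    rcases Nat.even_or_odd n with h | h
    · have h0 := Nat.even_iff.mp h
      rw [if_pos h0, if_neg (by omega : ¬ n % 2 = 1), mul_one, pow_succ, mul_assoc]
    · have h1 := Nat.odd_iff.mp h
      rw [if_neg (by omega : ¬ n % 2 = 0), if_pos h1]
      group

theorem altWord_even_expand {H : Type*} [Group H] (t v : H) (n : ℕ) :
    altWord (v * t) t n =
      ((List.range n).map (fun j => if j % 2 = 0 then t ^ j * v * (t ^ j)⁻¹ else 1)).prod
        * t ^ n := by
  induction n with
  | zero => simp [altWord]
  | succ n ih =>
    rw [altWord_succ, ih, List.range_succ, List.map_append, List.prod_append]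
    simp only [List.map_cons, List.map_nil, List.prod_cons, List.prod_nil, mul_one]
    rcases Nat.even_or_odd n with h | h
    · have h0 := Nat.even_iff.mp h
      rw [if_pos h0, if_pos h0]
      group
    · have h1 := Nat.odd_iff.mp h
      rw [if_neg (by omega : ¬ n % 2 = 0), if_neg (by omega : ¬ n % 2 = 0), mul_one,
        pow_succ, mul_assoc]

theorem prod_filter_odd {M : Type*} [Monoid M] (c : ℕ → M) (n : ℕ) :
    ((List.range n).map (fun j => if j % 2 = 1 then c j else 1)).prod
      = ((List.range (n/2)).map (fun i => c (2*i+1))).prod := by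
  induction n with
  | zero => simp
  | succ n ih =>
    rw [List.range_succ, List.map_append, List.prod_append, ih]
    simp only [List.map_cons, List.map_nil, List.prod_cons, List.prod_nil, mul_one]
    rcases Nat.even_or_odd n with h | h
    · have h0 := Nat.even_iff.mp h
      rw [if_neg (by omega : ¬ n % 2 = 1), show (n+1)/2 = n/2 from by omega, mul_one]
    · have h1 := Nat.odd_iff.mp h
      rw [if_pos h1, show (n+1)/2 = n/2 + 1 from by omega, List.range_succ, List.map_append,
        List.prod_append]
      simp only [List.map_cons, List.map_nil, List.prod_cons, List.prod_nil, mul_one]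
      rw [show 2*(n/2)+1 = n from by omega]

theorem prod_filter_even {M : Type*} [Monoid M] (c : ℕ → M) (n : ℕ) :
    ((List.range n).map (fun j => if j % 2 = 0 then c j else 1)).prod
      = ((List.range ((n+1)/2)).map (fun i => c (2*i))).prod := by
  induction n with
  | zero => simp
  | succ n ih =>
    rw [List.range_succ, List.map_append, List.prod_append, ih]
    simp only [List.map_cons, List.map_nil, List.prod_cons, List.prod_nil, mul_one]
    rcases Nat.even_or_odd n with h | h
    · have h0 := Nat.even_iff.mp h
      rw [if_pos h0, show (n+1+1)/2 = (n+1)/2 + 1 from by omega, List.range_succ,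
        List.map_append, List.prod_append]
      simp only [List.map_cons, List.map_nil, List.prod_cons, List.prod_nil, mul_one]
      rw [show 2*((n+1)/2) = n from by omega]
    · have h1 := Nat.odd_iff.mp h
      rw [if_neg (by omega : ¬ n % 2 = 0), show (n+1+1)/2 = (n+1)/2 from by omega, mul_one]

theorem hom_map_range_prod {M N : Type*} [Monoid M] [Monoid N] (f : M →* N) (g : ℕ → M)
    (h : ℕ → N) (n : ℕ) (hgh : ∀ i < n, f (g i) = h i) :
    f (((List.range n).map g).prod) = ((List.range n).map h).prod := by
  rw [map_list_prod, List.map_map]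
  congr 1
  apply List.map_congr_left
  intro i hi
  exact hgh i (List.mem_range.mp hi)



section K
variable (k : ℕ)

def gg (j : ℕ) : FreeGroup (Fin (2*k)) := if h : j < 2*k then FreeGroup.of ⟨j, h⟩ else 1

def AA : FreeGroup (Fin (2*k)) := ((List.range k).map fun i => gg k (2*i)).prod
def BB : FreeGroup (Fin (2*k)) := ((List.range k).map fun i => gg k (2*i+1)).prod

def phi : FreeGroup (Fin (2*k)) →* FreeGroup (Fin (2*k)) :=
  FreeGroup.lift fun i => if (i:ℕ)+1 < 2*k then gg k ((i:ℕ)+1) else (AA k)⁻¹ * BB k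

def psi : FreeGroup (Fin (2*k)) →* FreeGroup (Fin (2*k)) :=
  FreeGroup.lift fun i => if (i:ℕ) = 0 then AA k * (BB k)⁻¹ else gg k ((i:ℕ)-1)

variable {k}

theorem gg_of {j : ℕ} (h : j < 2*k) : gg k j = FreeGroup.of ⟨j, h⟩ := dif_pos h

theorem of_eq_gg (i : Fin (2*k)) : FreeGroup.of i = gg k (i:ℕ) := by
  rw [gg_of i.isLt]

theorem phi_gg {j : ℕ} (h : j+1 < 2*k) : phi k (gg k j) = gg k (j+1) := by
  rw [gg_of (by omega : j < 2*k), phi, FreeGroup.lift_apply_of, if_pos h]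

theorem phi_gg_last (hk : 0 < k) : phi k (gg k (2*k-1)) = (AA k)⁻¹ * BB k := by
  rw [gg_of (by omega : 2*k-1 < 2*k), phi, FreeGroup.lift_apply_of, if_neg (by simp; omega)]

theorem psi_gg0 (hk : 0 < k) : psi k (gg k 0) = AA k * (BB k)⁻¹ := by
  rw [gg_of (by omega : 0 < 2*k), psi, FreeGroup.lift_apply_of, if_pos rfl]

theorem psi_gg {j : ℕ} (h0 : j ≠ 0) (h : j < 2*k) : psi k (gg k j) = gg k (j-1) := by
  rw [gg_of h, psi, FreeGroup.lift_apply_of, if_neg h0]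

theorem AA_cons (hk : 0 < k) :
    AA k = gg k 0 * ((List.range (k-1)).map fun i => gg k (2*i+2)).prod := by
  obtain ⟨l, rfl⟩ : ∃ l, k = l + 1 := ⟨k-1, by omega⟩
  rw [AA, List.range_succ_eq_map, List.map_cons, List.prod_cons, List.map_map]
  simp only [Nat.add_sub_cancel, Function.comp_def, Nat.mul_zero]
  rfl

theorem AA_snoc (hk : 0 < k) :
    AA k = ((List.range (k-1)).map fun i => gg k (2*i)).prod * gg k (2*k-2) := by
  obtain ⟨l, rfl⟩ : ∃ l, k = l + 1 := ⟨k-1, by omega⟩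
  rw [AA, List.range_succ, List.map_append, List.prod_append]
  simp only [Nat.add_sub_cancel, List.map_cons, List.map_nil, List.prod_cons, List.prod_nil,
    mul_one]
  have : 2*(l+1)-2 = 2*l := by omega
  rw [this]

theorem BB_snoc (hk : 0 < k) :
    BB k = ((List.range (k-1)).map fun i => gg k (2*i+1)).prod * gg k (2*k-1) := by
  obtain ⟨l, rfl⟩ : ∃ l, k = l + 1 := ⟨k-1, by omega⟩
  rw [BB, List.range_succ, List.map_append, List.prod_append]
  simp only [Nat.add_sub_cancel, List.map_cons, List.map_nil, List.prod_cons, List.prod_nil,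
    mul_one]
  have : 2*(l+1)-1 = 2*l+1 := by omega
  rw [this]

theorem hom_map_range_prod' {M N : Type*} [Monoid M] [Monoid N] (f : M →* N) (g : ℕ → M)
    (h : ℕ → N) (n : ℕ) (hgh : ∀ i < n, f (g i) = h i) :
    f (((List.range n).map g).prod) = ((List.range n).map h).prod := by
  rw [map_list_prod, List.map_map]
  congr 1
  exact List.map_congr_left fun i hi => hgh i (List.mem_range.mp hi)

theorem phi_AA : phi k (AA k) = BB k :=
  hom_map_range_prod' (phi k) _ _ k fun i hi => phi_gg (by omega)

theorem phi_BB (hk : 0 < k) : phi k (BB k) = (gg k 0)⁻¹ * BB k := by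
  have h1 := congrArg (phi k) (BB_snoc hk)
  rw [map_mul, phi_gg_last hk,
    hom_map_range_prod' (phi k) _ (fun i => gg k (2*i+2)) (k-1)
      (fun i hi => by rw [phi_gg (by omega)])] at h1
  have h2 : ((List.range (k-1)).map fun i => gg k (2*i+2)).prod = (gg k 0)⁻¹ * AA k := by
    rw [AA_cons hk]; group
  rw [h1, h2]
  group

theorem psi_AA (hk : 0 < k) : psi k (AA k) = AA k * (gg k (2*k-1))⁻¹ := by
  have h1 := congrArg (psi k) (AA_cons hk)
  rw [map_mul, psi_gg0 hk,
    hom_map_range_prod' (psi k) _ (fun i => gg k (2*i+1)) (k-1)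
      (fun i hi => by have h := psi_gg (k := k) (j := 2*i+2) (by omega) (by omega); simpa [show 2*i+2-1 = 2*i+1 from by omega] using h)] at h1
  have h2 : ((List.range (k-1)).map fun i => gg k (2*i+1)).prod = BB k * (gg k (2*k-1))⁻¹ := by
    rw [BB_snoc hk]; group
  rw [h1, h2]
  group

theorem psi_BB (hk : 0 < k) : psi k (BB k) = AA k := by
  have h1 := congrArg (psi k) (BB_snoc hk)
  rw [map_mul,
    hom_map_range_prod' (psi k) _ (fun i => gg k (2*i)) (k-1)
      (fun i hi => by have h := psi_gg (k := k) (j := 2*i+1) (by omega) (by omega); simpa [show 2*i+1-1 = 2*i from by omega] using h),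
    psi_gg (by omega) (by omega), show 2*k-1-1 = 2*k-2 from by omega] at h1
  rw [h1, ← AA_snoc hk]

theorem psi_comp_phi : (psi k).comp (phi k) = MonoidHom.id _ := by
  apply FreeGroup.ext_hom
  intro i
  have hk : 0 < k := by have := i.isLt; omega
  simp only [MonoidHom.comp_apply, MonoidHom.id_apply]
  rw [of_eq_gg i]
  by_cases h : (i:ℕ)+1 < 2*k
  · rw [phi_gg h, psi_gg (by omega) h, Nat.add_sub_cancel]
  · have hi : (i:ℕ) = 2*k-1 := by have := i.isLt; omega
    rw [hi, phi_gg_last hk, map_mul, map_inv, psi_AA hk, psi_BB hk]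
    group

theorem phi_comp_psi : (phi k).comp (psi k) = MonoidHom.id _ := by
  apply FreeGroup.ext_hom
  intro i
  have hk : 0 < k := by have := i.isLt; omega
  simp only [MonoidHom.comp_apply, MonoidHom.id_apply]
  rw [of_eq_gg i]
  by_cases h : (i:ℕ) = 0
  · rw [h, psi_gg0 hk, map_mul, map_inv, phi_AA, phi_BB hk]
    group
  · rw [psi_gg h i.isLt, phi_gg (by have := i.isLt; omega), show (i:ℕ)-1+1 = (i:ℕ) from by omega]

variable (k) in
def phie : FreeGroup (Fin (2*k)) ≃* FreeGroup (Fin (2*k)) :=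
  MonoidHom.toMulEquiv (phi k) (psi k) psi_comp_phi phi_comp_psi

theorem phie_apply (x : FreeGroup (Fin (2*k))) : phie k x = phi k x := rfl

theorem phie_pow_gg : ∀ j, j < 2*k → (phie k ^ j) (gg k 0) = gg k j := by
  intro j
  induction j with
  | zero => intro _; simp
  | succ j ih =>
    intro h
    rw [pow_succ', MulAut.mul_apply, ih (by omega), phie_apply, phi_gg h]

theorem phie_pow_2k (hk : 0 < k) : (phie k ^ (2*k)) (gg k 0) = (AA k)⁻¹ * BB k := by
  have h2 : (phie k ^ ((2*k-1)+1)) (gg k 0) = (AA k)⁻¹ * BB k := by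
    rw [pow_succ', MulAut.mul_apply, phie_pow_gg _ (by omega), phie_apply, phi_gg_last hk]
  rw [show (2*k-1)+1 = 2*k from by omega] at h2
  exact h2

end K

section G

open SemidirectProduct Multiplicative

variable (k : ℕ)

abbrev Gk := PresentedGroup (dihedralArtinRels (2*k+1))

def ga : Gk k := PresentedGroup.of 0
def gb : Gk k := PresentedGroup.of 1

theorem G_rel : altWord (ga k) (gb k) (2*k+1) = altWord (gb k) (ga k) (2*k+1) := by
  have h : (PresentedGroup.mk (dihedralArtinRels (2*k+1)))
      (altWord (FreeGroup.of 0) (FreeGroup.of 1) (2*k+1) *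
        (altWord (FreeGroup.of 1) (FreeGroup.of 0) (2*k+1))⁻¹) = 1 := by
    apply (QuotientGroup.eq_one_iff _).mpr
    exact Subgroup.subset_normalClosure rfl
  rw [map_mul, map_inv, map_altWord, map_altWord, mul_inv_eq_one] at h
  exact h

def ub (j : ℕ) : Gk k := ga k ^ j * (gb k * (ga k)⁻¹) * (ga k ^ j)⁻¹

variable {k}

theorem ub_succ (j : ℕ) : ub k (j+1) = ga k * ub k j * (ga k)⁻¹ := by
  unfold ub
  rw [pow_succ]
  group

theorem ub_key : ((List.range k).map fun i => ub k (2*i+1)).prod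
    = ((List.range (k+1)).map fun i => ub k (2*i)).prod := by
  have h := G_rel k
  have hb : gb k = (gb k * (ga k)⁻¹) * ga k := by group
  rw [hb] at h
  rw [altWord_odd_expand, altWord_even_expand] at h
  have h2 := mul_right_cancel h
  rw [prod_filter_odd, prod_filter_even,
    show (2*k+1)/2 = k from by omega, show (2*k+1+1)/2 = k+1 from by omega] at h2
  exact h2

variable (k) in
def fone : FreeGroup (Fin (2*k)) →* Gk k := FreeGroup.lift fun i => ub k (i:ℕ)

theorem fone_gg {j : ℕ} (h : j < 2*k) : fone k (gg k j) = ub k j := by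
  rw [gg_of h, fone, FreeGroup.lift_apply_of]

theorem fone_AA : fone k (AA k) = ((List.range k).map fun i => ub k (2*i)).prod :=
  hom_map_range_prod (fone k) _ _ k fun i hi => fone_gg (by omega)

theorem fone_BB : fone k (BB k) = ((List.range k).map fun i => ub k (2*i+1)).prod :=
  hom_map_range_prod (fone k) _ _ k fun i hi => fone_gg (by omega)

theorem fone_phi (x : FreeGroup (Fin (2*k))) :
    fone k (phi k x) = ga k * fone k x * (ga k)⁻¹ := by
  have hcomp : (fone k).comp (phi k) = (MulAut.conj (ga k)).toMonoidHom.comp (fone k) := by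
    apply FreeGroup.ext_hom
    intro i
    have hk : 0 < k := by have := i.isLt; omega
    simp only [MonoidHom.comp_apply, MulEquiv.coe_toMonoidHom, MulAut.conj_apply]
    rw [of_eq_gg i]
    by_cases h : (i:ℕ)+1 < 2*k
    · rw [phi_gg h, fone_gg h, fone_gg (by omega), ub_succ]
    · have hi : (i:ℕ) = 2*k-1 := by have := i.isLt; omega
      rw [hi, phi_gg_last hk, map_mul, map_inv, fone_AA, fone_BB, fone_gg (by omega)]
      have hO : ((List.range k).map fun i => ub k (2*i+1)).prod
          = ((List.range k).map fun i => ub k (2*i)).prod * ub k (2*k) := by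
        rw [ub_key, List.range_succ, List.map_append, List.prod_append]
        simp only [List.map_cons, List.map_nil, List.prod_cons, List.prod_nil, mul_one]
      rw [hO]
      have hu : ub k (2*k) = ga k * ub k (2*k-1) * (ga k)⁻¹ := by
        have := ub_succ (k := k) (2*k-1)
        rw [show 2*k-1+1 = 2*k from by omega] at this
        exact this
      rw [hu]
      group
  simpa using DFunLike.congr_fun hcomp x

theorem fone_psi (y : FreeGroup (Fin (2*k))) :
    fone k (psi k y) = (ga k)⁻¹ * fone k y * ga k := by
  have h2 : phi k (psi k y) = y := DFunLike.congr_fun (phi_comp_psi (k := k)) y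
  have h3 := fone_phi (psi k y)
  rw [h2] at h3
  rw [h3]
  group

theorem phie_inv_apply (y : FreeGroup (Fin (2*k))) : (phie k)⁻¹ y = psi k y := rfl

theorem fone_phie_zpow : ∀ (z : ℤ) (x : FreeGroup (Fin (2*k))),
    fone k ((phie k ^ z) x) = ga k ^ z * fone k x * (ga k ^ z)⁻¹ := by
  intro z
  induction z using Int.induction_on with
  | zero => intro x; simp
  | succ n ih =>
    intro x
    have hsplit : (phie k ^ ((n:ℤ)+1)) x = phie k ((phie k ^ (n:ℤ)) x) := by
      rw [show (n:ℤ)+1 = 1+(n:ℤ) from by ring, zpow_add, zpow_one, MulAut.mul_apply]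
    rw [hsplit, phie_apply, fone_phi, ih]
    rw [show ((n:ℤ)+1) = 1+(n:ℤ) from by ring, zpow_add, zpow_one]
    group
  | pred n ih =>
    intro x
    have hsplit : (phie k ^ (-(n:ℤ)-1)) x = (phie k)⁻¹ ((phie k ^ (-(n:ℤ))) x) := by
      rw [show -(n:ℤ)-1 = (-1) + (-(n:ℤ)) from by ring, zpow_add, zpow_neg_one, MulAut.mul_apply]
    rw [hsplit, phie_inv_apply, fone_psi, ih]
    rw [show (-(n:ℤ)-1) = (-1) + (-(n:ℤ)) from by ring, zpow_add, zpow_neg_one]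
    group

variable (k) in
def theta : Multiplicative ℤ →* MulAut (FreeGroup (Fin (2*k))) := zpowersHom _ (phie k)

variable (k) in
abbrev SPk := SemidirectProduct (FreeGroup (Fin (2*k))) (Multiplicative ℤ) (theta k)

theorem compat : ∀ g : Multiplicative ℤ,
    (fone k).comp ((theta k g)).toMonoidHom
      = (MulAut.conj ((zpowersHom (Gk k) (ga k)) g)).toMonoidHom.comp (fone k) := by
  intro g
  apply MonoidHom.ext
  intro x
  simp only [MonoidHom.comp_apply, MulEquiv.coe_toMonoidHom, MulAut.conj_apply, theta,
    zpowersHom_apply]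
  rw [fone_phie_zpow]

variable (k) in
def Phi : SPk k →* Gk k := SemidirectProduct.lift (fone k) (zpowersHom (Gk k) (ga k)) compat

theorem hc (j : ℕ) :
    (inr (ofAdd 1) : SPk k)^j * inl (gg k 0) * ((inr (ofAdd 1) : SPk k)^j)⁻¹
      = inl ((phie k ^ j) (gg k 0)) := by
  rw [← map_pow, ← map_inv, ← SemidirectProduct.inl_aut]
  congr 1
  have h1 : theta k ((ofAdd (1:ℤ))^j) = phie k ^ (j:ℤ) := by
    simp [theta, ← ofAdd_nsmul]
  rw [h1, zpow_natCast]

theorem range_map_congr {M : Type*} (f g : ℕ → M) (n : ℕ) (h : ∀ i < n, f i = g i) :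
    ((List.range n).map f) = ((List.range n).map g) :=
  List.map_congr_left fun i hi => h i (List.mem_range.mp hi)

theorem SP_rel (hk : 0 < k) :
    altWord (inr (ofAdd 1) : SPk k) (inl (gg k 0) * inr (ofAdd 1)) (2*k+1)
      = altWord (inl (gg k 0) * inr (ofAdd 1)) (inr (ofAdd 1)) (2*k+1) := by
  rw [altWord_odd_expand, altWord_even_expand]
  congr 1
  rw [prod_filter_odd, prod_filter_even,
    show (2*k+1)/2 = k from by omega, show (2*k+1+1)/2 = k+1 from by omega]
  have hL : ((List.range k).map
      (fun i => (inr (ofAdd 1) : SPk k)^(2*i+1) * inl (gg k 0)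
        * ((inr (ofAdd 1) : SPk k)^(2*i+1))⁻¹)).prod = inl (BB k) := by
    rw [range_map_congr
        (fun i => (inr (ofAdd 1) : SPk k)^(2*i+1) * inl (gg k 0)
          * ((inr (ofAdd 1) : SPk k)^(2*i+1))⁻¹)
        (fun i => (inl (gg k (2*i+1)) : SPk k)) k
        (fun i hi => (hc (2*i+1)).trans (by rw [phie_pow_gg _ (by omega : 2*i+1 < 2*k)])),
      ← hom_map_range_prod (inl : FreeGroup (Fin (2*k)) →* SPk k)
        (fun i => gg k (2*i+1)) _ k (fun i hi => rfl)]
    simp only [BB]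
  have hR : ((List.range (k+1)).map
      (fun i => (inr (ofAdd 1) : SPk k)^(2*i) * inl (gg k 0)
        * ((inr (ofAdd 1) : SPk k)^(2*i))⁻¹)).prod = inl (BB k) := by
    rw [List.range_succ, List.map_append, List.prod_append]
    simp only [List.map_cons, List.map_nil, List.prod_cons, List.prod_nil, mul_one]
    rw [range_map_congr
        (fun i => (inr (ofAdd 1) : SPk k)^(2*i) * inl (gg k 0)
          * ((inr (ofAdd 1) : SPk k)^(2*i))⁻¹)
        (fun i => (inl (gg k (2*i)) : SPk k)) k
        (fun i hi => (hc (2*i)).trans (by rw [phie_pow_gg _ (by omega : 2*i < 2*k)])),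
      ← hom_map_range_prod (inl : FreeGroup (Fin (2*k)) →* SPk k)
        (fun i => gg k (2*i)) _ k (fun i hi => rfl),
      hc, phie_pow_2k hk, ← map_mul]
    simp only [AA]
    congr 1
    group
  rw [hL, hR]

variable (k) in
def fgen : Fin 2 → SPk k := ![inr (ofAdd 1), inl (gg k 0) * inr (ofAdd 1)]

theorem hrelSP (hk : 0 < k) : ∀ r ∈ dihedralArtinRels (2*k+1),
    FreeGroup.lift (fgen k) r = 1 := by
  intro r hr
  simp only [dihedralArtinRels, Set.mem_singleton_iff] at hr
  subst hr
  rw [map_mul, map_inv, map_altWord, map_altWord, mul_inv_eq_one]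
  simp only [FreeGroup.lift_apply_of, fgen, Matrix.cons_val_zero, Matrix.cons_val_one, Matrix.head_cons]
  exact SP_rel hk

def Psi (hk : 0 < k) : Gk k →* SPk k := PresentedGroup.toGroup (hrelSP hk)

theorem Psi_a (hk : 0 < k) : Psi hk (ga k) = inr (ofAdd 1) := by
  rw [ga, Psi, PresentedGroup.toGroup.of]
  simp [fgen]

theorem Psi_b (hk : 0 < k) : Psi hk (gb k) = inl (gg k 0) * inr (ofAdd 1) := by
  rw [gb, Psi, PresentedGroup.toGroup.of]
  simp [fgen]

theorem Phi_a : Phi k (inr (ofAdd 1)) = ga k := by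
  rw [Phi, SemidirectProduct.lift_inr, zpowersHom_apply]
  simp

theorem Phi_inl (x : FreeGroup (Fin (2*k))) : Phi k (inl x) = fone k x := by
  rw [Phi, SemidirectProduct.lift_inl]

theorem Phi_Psi (hk : 0 < k) : (Phi k).comp (Psi hk) = MonoidHom.id (Gk k) := by
  apply PresentedGroup.ext
  intro x
  fin_cases x
  · show Phi k (Psi hk (ga k)) = ga k
    rw [Psi_a hk, Phi_a]
  · show Phi k (Psi hk (gb k)) = gb k
    rw [Psi_b hk, map_mul, Phi_a, Phi_inl, fone_gg (by omega : 0 < 2*k)]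
    unfold ub
    group

theorem Psi_Phi (hk : 0 < k) : (Psi hk).comp (Phi k) = MonoidHom.id (SPk k) := by
  apply SemidirectProduct.hom_ext
  · apply FreeGroup.ext_hom
    intro i
    simp only [MonoidHom.comp_apply, MonoidHom.id_apply]
    rw [Phi_inl, fone, FreeGroup.lift_apply_of]
    show Psi hk (ub k (i:ℕ)) = inl (FreeGroup.of i)
    unfold ub
    rw [map_mul, map_mul, map_mul, map_inv, map_inv, map_pow, Psi_a hk, Psi_b hk]
    rw [mul_inv_cancel_right]
    rw [hc, phie_pow_gg _ i.isLt, of_eq_gg i]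
  · apply MonoidHom.ext_mint
    simp only [MonoidHom.comp_apply, MonoidHom.id_apply]
    rw [Phi_a, Psi_a hk]

def Eiso (hk : 0 < k) : Gk k ≃* SPk k :=
  MonoidHom.toMulEquiv (Psi hk) (Phi k) (Phi_Psi hk) (Psi_Phi hk)

end G


section Final

open SemidirectProduct Multiplicative

variable {k : ℕ}

theorem hab : Abelianization.of (gb k) = Abelianization.of (ga k) := by
  have h := congrArg (Abelianization.of (G := Gk k)) (G_rel k)
  rw [map_altWord, map_altWord, altWord_comm, altWord_comm,
    show (2*k+1+1)/2 = k+1 from by omega, show (2*k+1)/2 = k from by omega] at h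
  set x := Abelianization.of (ga k)
  set y := Abelianization.of (gb k)
  have h3 : y * (x ^ k * y ^ k) = x * (x ^ k * y ^ k) := by
    calc y * (x^k * y^k) = y * (y^k * x^k) := by rw [mul_comm (x^k) (y^k)]
    _ = y^(k+1) * x^k := by rw [pow_succ', mul_assoc]
    _ = x^(k+1) * y^k := h.symm
    _ = x * (x^k * y^k) := by rw [pow_succ', mul_assoc]
  exact mul_right_cancel h3

variable (k) in
def phi0 : Gk k →* Multiplicative ℤ :=
  PresentedGroup.toGroup (f := fun _ => ofAdd 1) (by
    intro r hr
    simp only [dihedralArtinRels, Set.mem_singleton_iff] at hr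
    subst hr
    rw [map_mul, map_inv, map_altWord, map_altWord]
    simp only [FreeGroup.lift_apply_of]
    rw [altWord_same]
    group)

theorem phi0_a : phi0 k (ga k) = ofAdd 1 := by
  rw [ga, phi0, PresentedGroup.toGroup.of]

theorem phi0_b : phi0 k (gb k) = ofAdd 1 := by
  rw [gb, phi0, PresentedGroup.toGroup.of]

variable (k) in
def abIso : Abelianization (Gk k) ≃* Multiplicative ℤ :=
  MonoidHom.toMulEquiv (Abelianization.lift (phi0 k))
    (zpowersHom _ (Abelianization.of (ga k)))
    (by
      apply Abelianization.hom_ext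
      apply PresentedGroup.ext
      intro x
      fin_cases x
      · show zpowersHom _ (Abelianization.of (ga k))
            (Abelianization.lift (phi0 k) (Abelianization.of (ga k)))
          = Abelianization.of (ga k)
        rw [Abelianization.lift_apply_of, phi0_a, zpowersHom_apply]
        simp
      · show zpowersHom _ (Abelianization.of (ga k))
            (Abelianization.lift (phi0 k) (Abelianization.of (gb k)))
          = Abelianization.of (gb k)
        rw [Abelianization.lift_apply_of, phi0_b, zpowersHom_apply, hab]
        simp)
    (by
      apply MonoidHom.ext_mint
      show Abelianization.lift (phi0 k) (zpowersHom _ (Abelianization.of (ga k)) (ofAdd 1)) = ofAdd 1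
      rw [zpowersHom_apply]
      simp only [toAdd_ofAdd, zpow_one]
      rw [Abelianization.lift_apply_of, phi0_a])

theorem abIso_a : abIso k (Abelianization.of (ga k)) = ofAdd 1 := by
  show Abelianization.lift (phi0 k) (Abelianization.of (ga k)) = ofAdd 1
  rw [Abelianization.lift_apply_of, phi0_a]

theorem abIso_b : abIso k (Abelianization.of (gb k)) = ofAdd 1 := by
  show Abelianization.lift (phi0 k) (Abelianization.of (gb k)) = ofAdd 1
  rw [Abelianization.lift_apply_of, phi0_b]

theorem mem_comm_iff (x : Gk k) : x ∈ commutator (Gk k) ↔ Abelianization.of x = 1 :=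
  Iff.symm (QuotientGroup.eq_one_iff x)

theorem hfone_ab (y : FreeGroup (Fin (2*k))) : Abelianization.of (fone k y) = 1 := by
  have h : (Abelianization.of (G := Gk k)).comp (fone k) = 1 := by
    apply FreeGroup.ext_hom
    intro i
    show Abelianization.of (fone k (FreeGroup.of i)) = 1
    rw [fone, FreeGroup.lift_apply_of]
    unfold ub
    simp only [map_mul, map_inv, map_pow, hab]
    group
  simpa using DFunLike.congr_fun h y

theorem hmap (hk : 0 < k) :
    Subgroup.map (Eiso hk).toMonoidHom (commutator (Gk k)) = commutator (SPk k) := by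
  have hsurj : Function.Surjective ⇑(Eiso hk).toMonoidHom := (Eiso hk).surjective
  rw [commutator_def, commutator_def, Subgroup.map_commutator,
    Subgroup.map_top_of_surjective _ hsurj]

theorem hrange (hk : 0 < k) :
    (inl : FreeGroup (Fin (2*k)) →* SPk k).range = commutator (SPk k) := by
  apply le_antisymm
  · rintro x ⟨y, rfl⟩
    rw [← hmap hk]
    refine Subgroup.mem_map.mpr ⟨Phi k (inl y), ?_, ?_⟩
    · rw [Phi_inl]
      exact (mem_comm_iff _).mpr (hfone_ab y)
    · exact DFunLike.congr_fun (Psi_Phi hk) (inl y)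
  · rw [range_inl_eq_ker_rightHom]
    exact Abelianization.commutator_subset_ker _

noncomputable def isoCommG (hk : 0 < k) :
    ↥(commutator (Gk k)) ≃* FreeGroup (Fin (2*k)) :=
  ((MulEquiv.subgroupMap (Eiso hk) (commutator (Gk k))).trans
    (MulEquiv.subgroupCongr (hmap hk))).trans
    ((MonoidHom.ofInjective SemidirectProduct.inl_injective).trans
      (MulEquiv.subgroupCongr (hrange hk))).symm

theorem finrank_part (hk : 0 < k) :
    Module.finrank ℚ (ℚ ⊗[ℤ] Additive (Abelianization ↥(commutator (Gk k)))) = 2*k := by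
  have addIso : Additive (Abelianization ↥(commutator (Gk k))) ≃+ (Fin (2*k) →₀ ℤ) :=
    (MulEquiv.toAdditive ((isoCommG hk).abelianizationCongr)).trans
      (FreeAbelianGroup.equivFinsupp (Fin (2*k)))
  have lin2 : (ℚ ⊗[ℤ] Additive (Abelianization ↥(commutator (Gk k)))) ≃ₗ[ℚ]
      (ℚ ⊗[ℤ] (Fin (2*k) →₀ ℤ)) :=
    TensorProduct.AlgebraTensorModule.congr (LinearEquiv.refl ℚ ℚ) addIso.toIntLinearEquiv
  rw [lin2.finrank_eq, Module.finrank_baseChange, Module.finrank_finsupp_self, Fintype.card_fin]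

end Final

end DihedralAux

/-- For odd `m`, the Artin group of type `I₂(m)` has abelianization `ℤ` (both generators
mapping to the same generator) and zeroth-order degree `δ₀ = m - 1`. -/
theorem dihedral_artin_delta_zero (m : ℕ) (hm : 3 ≤ m) (hodd : Odd m) :
    (∃ e : Abelianization (PresentedGroup (dihedralArtinRels m)) ≃* Multiplicative ℤ,
      e (Abelianization.of (PresentedGroup.of 0)) = Multiplicative.ofAdd 1 ∧
      e (Abelianization.of (PresentedGroup.of 1)) = Multiplicative.ofAdd 1) ∧
    Module.finrank ℚ (ℚ ⊗[ℤ] Additive (Abelianization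
      ↥(commutator (PresentedGroup (dihedralArtinRels m))))) = m - 1 := by
  obtain ⟨k, rfl⟩ : ∃ k, m = 2*k+1 := by
    obtain ⟨k, hk⟩ := hodd
    exact ⟨k, by omega⟩
  have hk : 0 < k := by omega
  constructor
  · exact ⟨DihedralAux.abIso k, DihedralAux.abIso_a, DihedralAux.abIso_b⟩
  · rw [DihedralAux.finrank_part hk]
    omega
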